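/- There exist constants C, c > 0 depending only on α and C₀ such that for any j ≥ 1 with m_j ≤ n, with probability at least 1 − C exp(−c j²), one has inf_{s ≥ a_j} ( (1/2) c_{m_j} e^{m_j s} |ε_{m_j}| − Σ_{0 ≤ i < m_j} |ε_i| c_i e^{i s} ) > 0. -/

import Mathlib

open MeasureTheory ProbabilityTheory Filter
open scoped Classical

noncomputable section

/-- `mseq α j = 2⌊j^(1/α)⌋`, the sequence `m_j` from the construction. -/
def mseq (α : ℝ) (j : ℕ) : ℕ := 2 * ⌊(j : ℝ) ^ (1 / α)⌋₊

/-- The index `j` of the block `I_j = (m_(j-1), m_j]` containing `k`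
(with the convention `m_(-1) = -1`). -/
def blockIdx (α : ℝ) (k : ℕ) : ℕ := sInf {j : ℕ | k ≤ mseq α j}

/-- The deterministic coefficient sequence: `c_k = exp (-2^j)` for `k ∈ I_j`. -/
def cseq (α : ℝ) (k : ℕ) : ℝ := Real.exp (-(2 : ℝ) ^ blockIdx α k)

/-- `j_* = max {j : I_j ∩ {0,…,n} ≠ ∅}`, the index of the block containing `n`. -/
def jStar (α : ℝ) (n : ℕ) : ℕ := blockIdx α n

/-- `β = min {1/2, (1-α)/(2α)}`. -/
def betaC (α : ℝ) : ℝ := min (1 / 2) ((1 - α) / (2 * α))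

/-- `a_j = α j^(1-1/α) 2^(j-2) (1 + j^(-β))`. -/
def aseq (α : ℝ) (j : ℕ) : ℝ :=
  α * (j : ℝ) ^ (1 - 1 / α) * (2 : ℝ) ^ ((j : ℤ) - 2) * (1 + (j : ℝ) ^ (-betaC α))

/-- `b_j = α j^(1-1/α) 2^(j-1) (1 - j^(-β))`. -/
def bseq (α : ℝ) (j : ℕ) : ℝ :=
  α * (j : ℝ) ^ (1 - 1 / α) * (2 : ℝ) ^ ((j : ℤ) - 1) * (1 - (j : ℝ) ^ (-betaC α))

/-- `φ_j(t) = c_(m_j) e^(t m_j)` with `c_(m_j) = exp (-2^j)`. -/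
def phi (α : ℝ) (j : ℕ) (t : ℝ) : ℝ := Real.exp (-(2 : ℝ) ^ j) * Real.exp (t * mseq α j)

/-- `g_n(t) = f_n(e^t) = ∑_{k=0}^n c_k ε_k e^{tk}`. -/
def gval (α : ℝ) {Ω : Type*} (ε : ℕ → Ω → ℝ) (n : ℕ) (ω : Ω) (t : ℝ) : ℝ :=
  ∑ k ∈ Finset.range (n + 1), cseq α k * ε k ω * Real.exp (t * k)

/-- `R_n`: the number of real roots of `f_n(z) = ∑_{k=0}^n c_k ε_k z^k`
(counted without multiplicity). -/
def Rroots (α : ℝ) {Ω : Type*} (ε : ℕ → Ω → ℝ) (n : ℕ) (ω : Ω) : ℕ :=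
  Set.ncard {t : ℝ | ∑ k ∈ Finset.range (n + 1), cseq α k * ε k ω * t ^ k = 0}

/-- `S_n`: the number of sign changes among `(ε_(m_0), …, ε_(m_(j_*-1)), ε_n)`. -/
def Schanges (α : ℝ) {Ω : Type*} (ε : ℕ → Ω → ℝ) (n : ℕ) (ω : Ω) : ℕ :=
  ((Finset.range (jStar α n)).filter fun j =>
    ε (mseq α j) ω * (if j + 1 < jStar α n then ε (mseq α (j + 1)) ω else ε n ω) < 0).card

-- ===== auxiliary lemmas =====
-- basic facts
lemma betaC_pos {α : ℝ} (h0 : 0 < α) (h1 : α < 1) : 0 < betaC α := by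
  have h2 : 0 < (1 - α) / (2 * α) := div_pos (by linarith) (by linarith)
  simp [betaC, h2]

lemma betaC_le_half (α : ℝ) : betaC α ≤ 1/2 := min_le_left _ _

lemma betaC_le {α : ℝ} (h0 : 0 < α) : betaC α ≤ (1/α - 1)/2 := by
  have : (1 - α) / (2 * α) = (1/α - 1)/2 := by
    rw [div_eq_div_iff (by linarith) (by norm_num)]
    field_simp
  rw [betaC, this]
  exact min_le_right _ _

lemma mseq_le {α : ℝ} (h0 : 0 < α) (j : ℕ) : (mseq α j : ℝ) ≤ 2 * (j : ℝ) ^ (1/α) := by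
  have hnn : (0:ℝ) ≤ (j : ℝ) ^ (1/α) := Real.rpow_nonneg (Nat.cast_nonneg j) _
  have := Nat.floor_le hnn
  simp only [mseq, Nat.cast_mul, Nat.cast_ofNat]
  nlinarith

lemma le_mseq {α : ℝ} (h0 : 0 < α) (j : ℕ) :
    2 * ((j : ℝ) ^ (1/α) - 1) ≤ (mseq α j : ℝ) := by
  have := Nat.lt_floor_add_one ((j : ℝ) ^ (1/α))
  simp only [mseq, Nat.cast_mul, Nat.cast_ofNat]
  nlinarith

lemma mseq_mono {α : ℝ} (h0 : 0 < α) : Monotone (mseq α) := by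
  intro a b hab
  have : (a:ℝ) ^ (1/α) ≤ (b:ℝ) ^ (1/α) :=
    Real.rpow_le_rpow (Nat.cast_nonneg a) (Nat.cast_le.mpr hab) (by positivity)
  exact Nat.mul_le_mul_left 2 (Nat.floor_le_floor this)

lemma self_le_mseq {α : ℝ} (h0 : 0 < α) (h1 : α < 1) (k : ℕ) : k ≤ mseq α k := by
  rcases Nat.eq_zero_or_pos k with rfl | hk
  · simp [mseq]
  · have h1k : (1:ℝ) ≤ (k:ℝ) := by exact_mod_cast hk
    have : (k:ℝ) ≤ (k:ℝ) ^ (1/α) := by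
      calc (k:ℝ) = (k:ℝ) ^ (1:ℝ) := by rw [Real.rpow_one]
      _ ≤ (k:ℝ) ^ (1/α) := by
          apply Real.rpow_le_rpow_of_exponent_le h1k
          rw [le_div_iff₀ h0]; nlinarith
    have hk' : k ≤ ⌊(k : ℝ) ^ (1 / α)⌋₊ := Nat.le_floor this
    calc k ≤ 2 * k := by omega
    _ ≤ mseq α k := Nat.mul_le_mul_left 2 hk'

lemma le_mseq_blockIdx {α : ℝ} (h0 : 0 < α) (h1 : α < 1) (k : ℕ) :
    k ≤ mseq α (blockIdx α k) :=
  Nat.sInf_mem (s := {j : ℕ | k ≤ mseq α j}) ⟨k, self_le_mseq h0 h1 k⟩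

lemma blockIdx_le {α : ℝ} {k j : ℕ} (h : k ≤ mseq α j) : blockIdx α k ≤ j :=
  Nat.sInf_le h

-- eventual lemmas
lemma ev_poly_le_exp (c p b : ℝ) (hb : 0 < b) :
    ∀ᶠ j : ℕ in atTop, c * (j:ℝ)^p ≤ Real.exp (b*j) := by
  have h := tendsto_rpow_mul_exp_neg_mul_atTop_nhds_zero p b hb
  have h2 : Tendsto (fun x : ℝ => c * (x ^ p * Real.exp (-b * x))) atTop (nhds 0) := by
    simpa using h.const_mul c
  have h3 : ∀ᶠ x : ℝ in atTop, c * (x ^ p * Real.exp (-b * x)) ≤ 1 :=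
    h2.eventually_le_const (by norm_num)
  have h4 := (tendsto_natCast_atTop_atTop (R := ℝ)).eventually h3
  filter_upwards [h4] with j hj
  have he : (0:ℝ) < Real.exp (b * j) := Real.exp_pos _
  have : Real.exp (-b * j) = (Real.exp (b * j))⁻¹ := by
    rw [← Real.exp_neg]; ring_nf
  rw [this] at hj
  calc c * (j:ℝ)^p = c * ((j:ℝ)^p * (Real.exp (b*j))⁻¹) * Real.exp (b*j) := by
        field_simp
  _ ≤ 1 * Real.exp (b*j) := by
        apply mul_le_mul_of_nonneg_right _ he.le
        exact (by linarith [hj] : c * ((j:ℝ)^p * (Real.exp (b*j))⁻¹) ≤ 1)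
  _ = Real.exp (b*j) := one_mul _

lemma ev_const_le_rpow (c r : ℝ) (hr : 0 < r) :
    ∀ᶠ j : ℕ in atTop, c ≤ (j:ℝ)^r := by
  have h := tendsto_rpow_atTop hr
  have h3 : ∀ᶠ x : ℝ in atTop, c ≤ x ^ r := h.eventually_ge_atTop c
  exact (tendsto_natCast_atTop_atTop (R := ℝ)).eventually h3


lemma two_pow_eq_exp (j : ℕ) : (2:ℝ)^j = Real.exp (Real.log 2 * j) := by
  rw [mul_comm, Real.exp_nat_mul, Real.exp_log two_pos]

lemma bern_div {q : ℝ} (hq : 1 ≤ q) {x : ℝ} (hx0 : 0 ≤ x) (hx1 : x ≤ 1) :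
    (1 + q*x) * (1-x)^q ≤ (1:ℝ) := by
  have h1 : 1 + q*x ≤ (1+x)^q := by
    simpa using one_add_mul_self_le_rpow_one_add (by linarith : (-1:ℝ) ≤ x) hq
  have h2 : (1 + q*x) * (1-x)^q ≤ (1+x)^q * (1-x)^q :=
    mul_le_mul_of_nonneg_right h1 (Real.rpow_nonneg (by linarith) _)
  have h3 : (1+x)^q * (1-x)^q = ((1+x)*(1-x))^q :=
    (Real.mul_rpow (by linarith) (by linarith)).symm
  have h4 : ((1+x)*(1-x))^q ≤ 1 := by
    apply Real.rpow_le_one (by nlinarith) (by nlinarith) (by linarith)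
  linarith [h2, h3 ▸ h4]

lemma convex_rpow {q : ℝ} (hq : 1 ≤ q) {y x : ℝ} (hy : 0 < y) (hxy : y ≤ x) :
    y^q + q * y^(q-1) * (x - y) ≤ x^q := by
  have hs : (0:ℝ) ≤ x/y - 1 := by
    rw [sub_nonneg, le_div_iff₀ hy]; linarith
  have hb : 1 + q * (x/y - 1) ≤ (1 + (x/y - 1))^q :=
    one_add_mul_self_le_rpow_one_add (by linarith) hq
  have hxy' : (1 + (x/y - 1)) = x/y := by ring
  rw [hxy'] at hb
  have hdiv : (x/y)^q = x^q / y^q := Real.div_rpow (by linarith) hy.le q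
  rw [hdiv] at hb
  have hyq : (0:ℝ) < y^q := Real.rpow_pos_of_pos hy q
  have hym : y^(q-1) = y^q / y := by
    rw [Real.rpow_sub hy, Real.rpow_one]
  rw [hym]
  have hmul := mul_le_mul_of_nonneg_right hb hyq.le
  have hxx : x^q / y^q * y^q = x^q := by field_simp
  have hexp : (1 + q * (x/y - 1)) * y^q = y^q + q * (y^q/y) * (x - y) := by
    field_simp
  linarith [hmul, hxx ▸ hmul]

set_option maxHeartbeats 2000000 in
lemma keylemma {α : ℝ} (h0 : 0 < α) (h1 : α < 1) :
    ∃ J : ℕ, 2 ≤ J ∧ ∀ j : ℕ, J ≤ j →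
      (0 < aseq α j) ∧
      (2*(j:ℝ)^2 + 2 ≤ aseq α j) ∧
      (∀ l : ℕ, l < j →
        (2:ℝ)^j - 2^l + 2*(j:ℝ)^2 + 2 ≤ ((mseq α j : ℝ) - (mseq α l : ℝ)) * aseq α j) ∧
      ((mseq α j : ℝ) * Real.exp (-(j:ℝ)^2) ≤ Real.exp (-(j:ℝ)^2/2)) := by
  obtain ⟨q, hq_def⟩ : ∃ q : ℝ, q = 1/α := ⟨_, rfl⟩
  have hα_inv : 1/α = q := hq_def.symm
  have hq1 : 1 < q := by rw [hq_def, lt_div_iff₀ h0]; linarith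
  have hαq : α * q = 1 := by rw [hq_def]; field_simp
  obtain ⟨β, hβ_def⟩ : ∃ β : ℝ, β = betaC α := ⟨_, rfl⟩
  have hβ0 : 0 < β := hβ_def ▸ betaC_pos h0 h1
  have hβh : β ≤ 1/2 := hβ_def ▸ betaC_le_half α
  have hβq : β ≤ (q-1)/2 := by
    have := betaC_le h0; rw [hq_def]; rw [hβ_def]; linarith [this]
  obtain ⟨Q, hQ_def⟩ : ∃ Q : ℝ, Q = max 1 (q-1) := ⟨_, rfl⟩
  have hQ1 : 1 ≤ Q := hQ_def ▸ le_max_left _ _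
  have hQq : q - 1 ≤ Q := hQ_def ▸ le_max_right _ _
  obtain ⟨D, hD_def⟩ : ∃ D : ℝ, D = 3*(1+q) := ⟨_, rfl⟩
  have hD3 : 3 ≤ D := by rw [hD_def]; linarith
  have hlog2 : (0:ℝ) < Real.log 2 := Real.log_pos (by norm_num)
  have hev : ∀ᶠ j : ℕ in atTop, (2 ≤ j) ∧
      ((16/α) * (j:ℝ)^(q+1) ≤ Real.exp (Real.log 2 * j)) ∧
      (6*Q ≤ (j:ℝ)^(1-β)) ∧ (6*α ≤ (j:ℝ)^(q-1-β)) ∧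
      (24 * (j:ℝ)^(3:ℝ) ≤ Real.exp (Real.log 2 * j)) ∧
      (8*q*D^2 ≤ (j:ℝ)^(1:ℝ)) ∧ (8*α ≤ (j:ℝ)^(q-1)) ∧
      (64 * (j:ℝ)^(2:ℝ) ≤ Real.exp (Real.log 2 * j)) ∧
      (2 * (j:ℝ)^q ≤ Real.exp (1/2 * j)) := by
    filter_upwards [eventually_ge_atTop 2,
      ev_poly_le_exp (16/α) (q+1) (Real.log 2) hlog2,
      ev_const_le_rpow (6*Q) (1-β) (by linarith),
      ev_const_le_rpow (6*α) (q-1-β) (by linarith),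
      ev_poly_le_exp 24 3 (Real.log 2) hlog2,
      ev_const_le_rpow (8*q*D^2) 1 one_pos,
      ev_const_le_rpow (8*α) (q-1) (by linarith),
      ev_poly_le_exp 64 2 (Real.log 2) hlog2,
      ev_poly_le_exp 2 q (1/2) (by norm_num)] with j a b c d e f g h i
    exact ⟨a, b, c, d, e, f, g, h, i⟩
  rw [eventually_atTop] at hev
  obtain ⟨J₀, hJ₀⟩ := hev
  refine ⟨max J₀ 2, le_max_right _ _, ?_⟩
  intro j hj
  obtain ⟨hj2, e1, e2a, e2b, e2c, e3, e4, e5, e6⟩ := hJ₀ j (le_trans (le_max_left _ _) hj)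
  clear hJ₀ hj
  have hrj2 : (2:ℝ) ≤ (j:ℝ) := by exact_mod_cast hj2
  have hrj0 : (0:ℝ) < (j:ℝ) := by linarith
  have hrj1 : (1:ℝ) ≤ (j:ℝ) := by linarith
  have hP0 : (0:ℝ) < 2^j := by positivity
  obtain ⟨t, ht_def⟩ : ∃ t : ℝ, t = (j:ℝ)^(-β) := ⟨_, rfl⟩
  have ht0 : 0 ≤ t := ht_def ▸ Real.rpow_nonneg hrj0.le _
  have ht1 : t ≤ 1 := ht_def ▸ Real.rpow_le_one_of_one_le_of_nonpos hrj1 (by linarith)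
  obtain ⟨v, hv_def⟩ : ∃ v : ℝ, v = α * (j:ℝ)^(1-q) := ⟨_, rfl⟩
  have hrjq1 : (0:ℝ) < (j:ℝ)^(q-1) := Real.rpow_pos_of_pos hrj0 _
  have hv_eq : v = α / (j:ℝ)^(q-1) := by
    rw [hv_def, show (1-q) = -(q-1) by ring, Real.rpow_neg hrj0.le, div_eq_mul_inv]
  have hv0 : 0 < v := by rw [hv_eq]; positivity
  have hz : (2:ℝ)^((j:ℤ)-2) = 2^j/4 := by
    rw [zpow_sub₀ (two_ne_zero), zpow_natCast]
    norm_num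
  have haseq : aseq α j = v * (2^j/4) * (1+t) := by
    rw [aseq, hz, hα_inv, ← hβ_def, ← ht_def, hv_def]
  have ha0 : 0 < aseq α j := by
    rw [haseq]; positivity
  -- Case A : 2 rj^2 + 2 ≤ aseq
  have hprod : (j:ℝ)^(1-q) * (j:ℝ)^(q+1) = (j:ℝ)^2 := by
    rw [← Real.rpow_add hrj0, show (1-q)+(q+1) = (2:ℝ) by ring, Real.rpow_two]
  have hcancel : α * (16/α) = 16 := by field_simp
  have hsq : (1:ℝ) ≤ (j:ℝ)^2 := by
    calc (1:ℝ) = 1*1 := by norm_num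
    _ ≤ (j:ℝ)*(j:ℝ) := mul_le_mul hrj1 hrj1 (by norm_num) hrj0.le
    _ = (j:ℝ)^2 := (sq ((j:ℝ))).symm
  have hA : 2*(j:ℝ)^2 + 2 ≤ aseq α j := by
    have h16 : (16/α) * (j:ℝ)^(q+1) ≤ 2^j := by rw [two_pow_eq_exp j]; exact e1
    have key : v * ((16/α) * (j:ℝ)^(q+1)) = 16 * (j:ℝ)^2 := by
      calc v * ((16/α) * (j:ℝ)^(q+1))
          = (α * (16/α)) * ((j:ℝ)^(1-q) * (j:ℝ)^(q+1)) := by rw [hv_def]; ring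
      _ = 16 * (j:ℝ)^2 := by rw [hcancel, hprod]
    have step1 : v * ((16/α) * (j:ℝ)^(q+1)) ≤ v * 2^j :=
      mul_le_mul_of_nonneg_left h16 hv0.le
    have step2 : 16 * (j:ℝ)^2 ≤ v * 2^j := by rw [← key]; exact step1
    have step3 : v * (2^j/4) * 1 ≤ v * (2^j/4) * (1+t) := by
      apply mul_le_mul_of_nonneg_left (by linarith) (by positivity)
    have hE : v * (2^j/4) = (v * 2^j)/4 := by ring
    rw [haseq]
    linarith [step2, step3, hsq]
  refine ⟨ha0, hA, ?_, ?_⟩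
  · intro l hl
    have hrl0 : (0:ℝ) ≤ (l:ℝ) := Nat.cast_nonneg l
    have hlj : (l:ℝ) + 1 ≤ (j:ℝ) := by exact_mod_cast Nat.succ_le_of_lt hl
    have hmd : 2*((j:ℝ)^q - (l:ℝ)^q) - 2 ≤ (mseq α j : ℝ) - (mseq α l : ℝ) := by
      have ha1 := le_mseq h0 j
      have ha2 := mseq_le h0 l
      rw [hα_inv] at ha1 ha2
      linarith
    have hstep0 : (2*((j:ℝ)^q - (l:ℝ)^q) - 2) * aseq α j
        ≤ ((mseq α j:ℝ) - (mseq α l:ℝ)) * aseq α j :=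
      mul_le_mul_of_nonneg_right hmd ha0.le
    obtain ⟨w, hw_def⟩ : ∃ w:ℝ, w = v * ((j:ℝ)^q - (l:ℝ)^q) := ⟨_, rfl⟩
    have hform : (2*((j:ℝ)^q - (l:ℝ)^q) - 2) * aseq α j = (2^j/2) * ((w - v) * (1+t)) := by
      rw [haseq, hw_def]; ring
    suffices hX : (2:ℝ)^j - 2^l + 2*(j:ℝ)^2 + 2 ≤ (2^j/2) * ((w - v)*(1+t)) by
      rw [← hform] at hX; linarith
    obtain ⟨μ', hμ_def⟩ : ∃ m:ℝ, m = (4*(j:ℝ)^2+4)/2^j := ⟨_, rfl⟩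
    have hμ0 : 0 ≤ μ' := by rw [hμ_def]; positivity
    have hμ8 : μ' ≤ 1/8 := by
      have h64 : 64*(j:ℝ)^2 ≤ 2^j := by
        have h' := e5; rw [Real.rpow_two] at h'; rw [two_pow_eq_exp j]; exact h'
      rw [hμ_def, div_le_iff₀ hP0]
      linarith
    have hv8 : v ≤ 1/8 := by
      rw [hv_eq, div_le_iff₀ hrjq1]
      linarith [e4]
    by_cases hd1 : l + 1 = j
    · -- d = 1 case
      have h2l : (2:ℝ)^l = 2^j/2 := by
        rw [← hd1, pow_succ]; ring
      suffices hX1 : 1 + μ' ≤ (w-v)*(1+t) by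
        have hmm := mul_le_mul_of_nonneg_left hX1 (by positivity : (0:ℝ) ≤ 2^j/2)
        have hexp : (2^j/2)*(1+μ') = 2^j/2 + (2*(j:ℝ)^2+2) := by
          rw [hμ_def]; field_simp; ring
        rw [h2l]
        linarith
      have hl1 : (1:ℝ) ≤ (l:ℝ) := by
        have : 1 ≤ l := by omega
        exact_mod_cast this
      have hl0 : (0:ℝ) < (l:ℝ) := by linarith
      have hconv := convex_rpow hq1.le hl0 (by linarith : (l:ℝ) ≤ (j:ℝ))
      have hjl : (j:ℝ) - (l:ℝ) = 1 := by
        rw [← hd1]; push_cast; ring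
      rw [hjl, mul_one] at hconv
      have hwlow : q * (l:ℝ)^(q-1) ≤ (j:ℝ)^q - (l:ℝ)^q := by linarith
      have hw1 : ((l:ℝ)/(j:ℝ))^(q-1) ≤ w := by
        have hh1 : v * (q * (l:ℝ)^(q-1)) ≤ w := by
          rw [hw_def]; exact mul_le_mul_of_nonneg_left hwlow hv0.le
        have hh2 : v * (q * (l:ℝ)^(q-1)) = ((l:ℝ)/(j:ℝ))^(q-1) := by
          rw [Real.div_rpow hrl0 hrj0.le, hv_eq]
          rw [div_mul_eq_mul_div, div_eq_div_iff hrjq1.ne' hrjq1.ne']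
          calc α * (q * (l:ℝ)^(q-1)) * (j:ℝ)^(q-1)
              = (α*q) * ((l:ℝ)^(q-1) * (j:ℝ)^(q-1)) := by ring
          _ = (l:ℝ)^(q-1) * (j:ℝ)^(q-1) := by rw [hαq, one_mul]
        linarith
      have hfrac : (l:ℝ)/(j:ℝ) = 1 - 1/(j:ℝ) := by
        field_simp
        linarith
      have h12 : 1/(j:ℝ) ≤ 1/2 := by
        rw [div_le_div_iff₀ hrj0 (by norm_num : (0:ℝ) < 2)]; linarith
      have h1j0 : (0:ℝ) ≤ 1/(j:ℝ) := by positivity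
      have hbase0 : 0 < 1 - 1/(j:ℝ) := by linarith
      have hbase1 : 1 - 1/(j:ℝ) ≤ 1 := by linarith
      have hstep1 : (1 - 1/(j:ℝ))^Q ≤ (1 - 1/(j:ℝ))^(q-1) :=
        Real.rpow_le_rpow_of_exponent_ge hbase0 hbase1 hQq
      have hBern : 1 - Q*(1/(j:ℝ)) ≤ (1 - 1/(j:ℝ))^Q := by
        have hb := one_add_mul_self_le_rpow_one_add
          (s := -(1/(j:ℝ))) (by linarith : (-1:ℝ) ≤ -(1/(j:ℝ))) hQ1
        have he1 : (1:ℝ) + -(1/(j:ℝ)) = 1 - 1/(j:ℝ) := by ring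
        rw [he1] at hb
        linarith
      have hwQ : 1 - Q*(1/(j:ℝ)) ≤ w := by
        rw [hfrac] at hw1
        linarith
      -- smallness facts
      have hrjt : (j:ℝ)^(1-β) = (j:ℝ) * t := by
        rw [show (1:ℝ)-β = 1 + (-β) by ring, Real.rpow_add hrj0, Real.rpow_one, ht_def]
      have e2a' : 2*(Q*(1/(j:ℝ))) ≤ t/3 := by
        have h6Q : 6*Q ≤ (j:ℝ)*t := by rw [← hrjt]; exact e2a
        have hQj : Q*(1/(j:ℝ)) ≤ t/6 := by
          rw [mul_one_div, div_le_div_iff₀ hrj0 (by norm_num : (0:ℝ) < 6)]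
          linarith
        linarith
      have e2b' : 2*v ≤ t/3 := by
        have hrqt : (j:ℝ)^(q-1-β) = (j:ℝ)^(q-1) * t := by
          rw [show q-1-β = (q-1) + (-β) by ring, Real.rpow_add hrj0, ht_def]
        have h6a : 6*α ≤ (j:ℝ)^(q-1)*t := by rw [← hrqt]; exact e2b
        have hvt : v ≤ t/6 := by
          rw [hv_eq, div_le_div_iff₀ hrjq1 (by norm_num : (0:ℝ) < 6)]
          linarith
        linarith
      have ht_inv : 1/(j:ℝ) ≤ t := by
        have hmono := Real.rpow_le_rpow_of_exponent_le hrj1 (by linarith : (-1:ℝ) ≤ -β)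
        have hinv : (j:ℝ)^(-1:ℝ) = 1/(j:ℝ) := by
          rw [Real.rpow_neg hrj0.le, Real.rpow_one, one_div]
        rw [ht_def, ← hinv]
        exact hmono
      have e2c' : μ' ≤ t/3 := by
        have h3e : (j:ℝ)^(3:ℝ) = (j:ℝ)^(3:ℕ) := by
          rw [← Real.rpow_natCast (j:ℝ) 3]; norm_num
        have h24 : 24*(j:ℝ)^3 ≤ 2^j := by
          have h' := e2c; rw [h3e] at h'; rw [two_pow_eq_exp j]; exact h'
        rw [hμ_def, div_le_div_iff₀ hP0 (by norm_num : (0:ℝ) < 3)]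
        have hb1 : (1/(j:ℝ))*(2^j:ℝ) ≤ t*2^j :=
          mul_le_mul_of_nonneg_right ht_inv (by positivity)
        have hb2 : (1/(j:ℝ))*(24*(j:ℝ)^3) ≤ (1/(j:ℝ))*(2^j:ℝ) :=
          mul_le_mul_of_nonneg_left h24 (by positivity)
        have hb3 : (1/(j:ℝ))*(24*(j:ℝ)^3) = 24*(j:ℝ)^2 := by
          field_simp
        linarith
      -- final arithmetic
      have hg0 : 0 ≤ Q*(1/(j:ℝ)) := by positivity
      have key1 : (1 - Q*(1/(j:ℝ)) - v)*(1+t) ≤ (w - v)*(1+t) :=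
        mul_le_mul_of_nonneg_right (by linarith) (by linarith)
      have key3 : (Q*(1/(j:ℝ)) + v)*t ≤ (Q*(1/(j:ℝ)) + v)*1 :=
        mul_le_mul_of_nonneg_left ht1 (by linarith [hv0.le])
      have key2 : (1 - Q*(1/(j:ℝ)) - v)*(1+t)
          = 1 + t - (Q*(1/(j:ℝ)) + v)*1 - (Q*(1/(j:ℝ)) + v)*t := by ring
      linarith
    · -- d ≥ 2 case
      have hd2' : l + 2 ≤ j := by omega
      obtain ⟨d, hd_def⟩ : ∃ d:ℝ, d = (j:ℝ) - (l:ℝ) := ⟨_, rfl⟩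
      have hd2r : 2 ≤ d := by
        rw [hd_def]
        have : ((l:ℝ) + 2) ≤ (j:ℝ) := by exact_mod_cast hd2'
        linarith
      have hd0 : 0 < d := by linarith
      obtain ⟨x, hx_def⟩ : ∃ x:ℝ, x = d/(j:ℝ) := ⟨_, rfl⟩
      have hx0 : 0 < x := by rw [hx_def]; positivity
      have hx1 : x ≤ 1 := by
        rw [hx_def, div_le_one hrj0, hd_def]; linarith
      have hq0 : (0:ℝ) < q := by linarith
      have hqx0 : (0:ℝ) < 1 + q*x := by positivity
      have hxq := bern_div hq1.le hx0.le hx1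
      have h1x : 1 - x = (l:ℝ)/(j:ℝ) := by
        rw [hx_def, hd_def]; field_simp; ring
      have hj1q : (j:ℝ)^(1-q) = (j:ℝ)/(j:ℝ)^q := by
        rw [Real.rpow_sub hrj0, Real.rpow_one]
      have hjq0 : (0:ℝ) < (j:ℝ)^q := Real.rpow_pos_of_pos hrj0 q
      have hw_eq : w = α * (j:ℝ) * (1 - ((l:ℝ)/(j:ℝ))^q) := by
        rw [hw_def, hv_def, Real.div_rpow hrl0 hrj0.le, hj1q]
        field_simp
      have hGle : (1-x)^q ≤ 1/(1+q*x) := by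
        rw [le_div_iff₀ hqx0]
        calc (1-x)^q * (1+q*x) = (1+q*x) * (1-x)^q := by ring
        _ ≤ 1 := hxq
      have hw_low : d/(1+q*x) ≤ w := by
        have hG : ((l:ℝ)/(j:ℝ))^q = (1-x)^q := by rw [h1x]
        have h5 : 1 - 1/(1+q*x) ≤ 1 - (1-x)^q := by linarith
        have h6 : α*(j:ℝ)*(1 - 1/(1+q*x)) ≤ α*(j:ℝ)*(1 - (1-x)^q) :=
          mul_le_mul_of_nonneg_left h5 (by positivity)
        have hrx : (j:ℝ)*x = d := by rw [hx_def]; field_simp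
        have h7 : α*(j:ℝ)*(1 - 1/(1+q*x)) = (α*q)*((j:ℝ)*x)/(1+q*x) := by
          field_simp
          ring
        rw [hαq, hrx, one_mul] at h7
        rw [hw_eq, hG]
        linarith
      -- the common final step needs hww : 2 - (2*2^l)/2^j + v + μ' ≤ w
      have h2l4 : (4:ℝ)*2^l ≤ 2^j := by
        have hple : (2:ℝ)^(l+2) ≤ 2^j := by
          apply pow_le_pow_right₀ (by norm_num : (1:ℝ) ≤ 2) hd2'
        calc (4:ℝ)*2^l = 2^(l+2) := by rw [pow_add]; ring
        _ ≤ 2^j := hple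
      have h2l0 : (0:ℝ) ≤ (2*(2:ℝ)^l)/2^j := by positivity
      have h2lh : (2*(2:ℝ)^l)/2^j ≤ 1/2 := by
        rw [div_le_div_iff₀ hP0 (by norm_num : (0:ℝ) < 2)]
        linarith
      have hww : 2 - (2*(2:ℝ)^l)/2^j + v + μ' ≤ w := by
        by_cases hdD : d ≤ D
        · -- small d
          have he3 : 8*q*D^2 ≤ (j:ℝ) := by
            have h' := e3; rwa [Real.rpow_one] at h'
          have hof : d - q*d^2/(j:ℝ) = d*(1 - q*x) := by
            rw [hx_def]; field_simp
          have hstep : d - q*d^2/(j:ℝ) ≤ d/(1+q*x) := by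
            rw [hof, le_div_iff₀ hqx0]
            have hexp2 : d*(1-q*x)*(1+q*x) = d - d*(q*x)^2 := by ring
            have h8 : 0 ≤ d*(q*x)^2 := by positivity
            linarith
          have hqd : q*d^2/(j:ℝ) ≤ 1/8 := by
            rw [div_le_iff₀ hrj0]
            have hdd : d^2 ≤ D^2 := by
              have hht := mul_le_mul hdD hdD (by linarith) (by linarith : (0:ℝ) ≤ D)
              calc d^2 = d*d := sq d
              _ ≤ D*D := hht
              _ = D^2 := (sq D).symm
            have hqq := mul_le_mul_of_nonneg_left hdd hq0.le
            linarith only [hqq, he3]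
          -- need : 2 - (2*2^l)/2^j + 3/8 ≤ d
          obtain ⟨dn, hdn⟩ : ∃ dn:ℕ, dn = j - l := ⟨_, rfl⟩
          have hdn2 : 2 ≤ dn := by omega
          have hdnd : (dn:ℝ) = d := by
            rw [hd_def, hdn]
            have : (l:ℕ) ≤ j := hl.le
            push_cast [Nat.cast_sub this]
            ring
          have hpow : (2:ℝ)^j = 2^l * 2^dn := by
            rw [← pow_add]
            congr 1
            omega
          have h2dn : (2*(2:ℝ)^l)/2^j = 2/2^dn := by
            rw [hpow]
            have h2l0' : (0:ℝ) < (2:ℝ)^l := by positivity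
            have h2dn0 : (0:ℝ) < (2:ℝ)^dn := by positivity
            field_simp
          have hclaim : 2 + 3/8 - 2/(2:ℝ)^dn ≤ (dn:ℝ) := by
            rcases Nat.lt_or_ge dn 3 with hcase|hcase
            · have : dn = 2 := by omega
              subst this
              norm_num
            · have h3 : (3:ℝ) ≤ (dn:ℝ) := by exact_mod_cast hcase
              have hdp : (0:ℝ) ≤ 2/(2:ℝ)^dn := by positivity
              linarith
          rw [h2dn]
          rw [hdnd] at hclaim
          linarith
        · -- large d
          push_neg at hdD
          have hq1x : 1 + q*x ≤ 1 + q := by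
            have := mul_le_mul_of_nonneg_left hx1 hq0.le
            linarith
          have hdx : d/(1+q) ≤ d/(1+q*x) :=
            div_le_div_of_nonneg_left hd0.le hqx0 hq1x
          have hD1 : 3 ≤ d/(1+q) := by
            rw [le_div_iff₀ (by linarith : (0:ℝ) < 1+q)]
            rw [hD_def] at hdD
            linarith
          linarith
      have hRHS0 : 0 ≤ 2 - (2*(2:ℝ)^l)/2^j + μ' := by linarith
      have hX1 : 2 - (2*(2:ℝ)^l)/2^j + μ' ≤ (w - v)*(1+t) := by
        have hwv : 2 - (2*(2:ℝ)^l)/2^j + μ' ≤ w - v := by linarith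
        have hmul : (w - v)*1 ≤ (w-v)*(1+t) :=
          mul_le_mul_of_nonneg_left (by linarith) (by linarith)
        linarith
      have hfin := mul_le_mul_of_nonneg_left hX1 (by positivity : (0:ℝ) ≤ 2^j/2)
      have hid : (2^j/2)*(2 - (2*(2:ℝ)^l)/2^j + μ') = 2^j - 2^l + (2*(j:ℝ)^2+2) := by
        rw [hμ_def]; field_simp; ring
      linarith
  · have hm : (mseq α j : ℝ) ≤ 2 * (j:ℝ)^q := by
      have := mseq_le h0 j; rw [hα_inv] at this; exact this
    have h6 : 2 * (j:ℝ)^q ≤ Real.exp (1/2 * j) := e6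
    have hexp0 : (0:ℝ) < Real.exp (-(j:ℝ)^2) := Real.exp_pos _
    calc (mseq α j : ℝ) * Real.exp (-(j:ℝ)^2)
        ≤ Real.exp (1/2*(j:ℝ)) * Real.exp (-(j:ℝ)^2) :=
          mul_le_mul_of_nonneg_right (le_trans hm h6) hexp0.le
    _ = Real.exp (1/2*(j:ℝ) - (j:ℝ)^2) := by rw [← Real.exp_add]; ring_nf
    _ ≤ Real.exp (-(j:ℝ)^2/2) := by
          apply Real.exp_le_exp.mpr
          have hjj : (j:ℝ) ≤ (j:ℝ)^2 := by
            calc (j:ℝ) = (j:ℝ)*1 := (mul_one _).symm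
            _ ≤ (j:ℝ)*(j:ℝ) := mul_le_mul_of_nonneg_left hrj1 hrj0.le
            _ = (j:ℝ)^2 := (sq ((j:ℝ))).symm
          linarith

lemma det_incl {α : ℝ} (h0 : 0 < α) (h1 : α < 1) {j : ℕ}
    (ha0 : 0 < aseq α j)
    (hA : 2*(j:ℝ)^2+2 ≤ aseq α j)
    (hkeyB : ∀ l, l < j →
      (2:ℝ)^j - 2^l + 2*(j:ℝ)^2 + 2 ≤ ((mseq α j:ℝ) - (mseq α l:ℝ)) * aseq α j)
    (e : ℕ → ℝ)
    (hδ : Real.exp (-(j:ℝ)^2) < |e (mseq α j)|)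
    (hK : ∑ i ∈ Finset.range (mseq α j), |e i| ≤ Real.exp ((j:ℝ)^2))
    (s : ℝ) (hs : aseq α j ≤ s) :
    0 < cseq α (mseq α j) * Real.exp ((mseq α j : ℝ) * s) * |e (mseq α j)| / 2 -
      ∑ i ∈ Finset.range (mseq α j), |e i| * cseq α i * Real.exp ((i:ℝ) * s) := by
  set m := mseq α j with hm_def
  have hs0 : 0 < s := lt_of_lt_of_le (by nlinarith [sq_nonneg (j:ℝ)] : (0:ℝ) < 2*(j:ℝ)^2+2) (le_trans hA hs)
  have hbm : blockIdx α m ≤ j := blockIdx_le (le_refl m)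
  have h2bm : (2:ℝ)^(blockIdx α m) ≤ 2^j :=
    pow_le_pow_right₀ (by norm_num : (1:ℝ) ≤ 2) hbm
  -- the per-i bound
  have hper : ∀ i ∈ Finset.range m, cseq α i * Real.exp ((i:ℝ)*s) ≤
      Real.exp (-(2*(j:ℝ)^2+2)) * (cseq α m * Real.exp ((m:ℝ)*s)) := by
    intro i hi
    have him : i < m := Finset.mem_range.mp hi
    have hmi1 : (1:ℝ) ≤ (m:ℝ) - (i:ℝ) := by
      have : (i:ℝ) + 1 ≤ (m:ℝ) := by exact_mod_cast Nat.succ_le_of_lt him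
      linarith
    have hbi : blockIdx α i ≤ j := blockIdx_le (le_trans him.le (le_refl _))
    rw [cseq, cseq, ← Real.exp_add, ← Real.exp_add, ← Real.exp_add]
    apply Real.exp_le_exp.mpr
    rcases lt_or_eq_of_le hbi with hlt | heq
    · have hkey2 := hkeyB (blockIdx α i) hlt
      have hile : (i:ℝ) ≤ (mseq α (blockIdx α i) : ℝ) := by
        exact_mod_cast le_mseq_blockIdx h0 h1 i
      have hmle : (mseq α (blockIdx α i) : ℝ) ≤ (m:ℝ) := by
        exact_mod_cast mseq_mono h0 hlt.le
      have hprod : ((mseq α j:ℝ) - (mseq α (blockIdx α i):ℝ)) * aseq α j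
          ≤ ((m:ℝ) - (i:ℝ)) * s := by
        apply mul_le_mul (by linarith) hs ha0.le (by linarith)
      linarith only [hkey2, hprod, h2bm]
    · have hs1 : (2*(j:ℝ)^2+2) ≤ s := le_trans hA hs
      have hmuls : 1 * s ≤ ((m:ℝ) - (i:ℝ)) * s :=
        mul_le_mul_of_nonneg_right hmi1 hs0.le
      rw [heq]
      linarith only [hs1, hmuls, h2bm]
  -- sum bound
  set X : ℝ := cseq α m * Real.exp ((m:ℝ)*s) with hX_def
  have hXpos : 0 < X := by
    rw [hX_def, cseq]; positivity
  have hB0 : 0 ≤ Real.exp (-(2*(j:ℝ)^2+2)) * X := by positivity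
  have hsum1 : ∑ i ∈ Finset.range m, |e i| * cseq α i * Real.exp ((i:ℝ)*s)
      ≤ (∑ i ∈ Finset.range m, |e i|) * (Real.exp (-(2*(j:ℝ)^2+2)) * X) := by
    rw [Finset.sum_mul]
    apply Finset.sum_le_sum
    intro i hi
    rw [mul_assoc]
    exact mul_le_mul_of_nonneg_left (hper i hi) (abs_nonneg _)
  have hsum2 : (∑ i ∈ Finset.range m, |e i|) * (Real.exp (-(2*(j:ℝ)^2+2)) * X)
      ≤ Real.exp ((j:ℝ)^2) * (Real.exp (-(2*(j:ℝ)^2+2)) * X) :=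
    mul_le_mul_of_nonneg_right hK hB0
  have hKB : Real.exp ((j:ℝ)^2) * (Real.exp (-(2*(j:ℝ)^2+2)) * X)
      = Real.exp (-(j:ℝ)^2) * Real.exp (-2) * X := by
    rw [← mul_assoc, ← Real.exp_add, ← Real.exp_add]
    congr 2
    ring
  have h12 : Real.exp (-2:ℝ) < 1/2 := by
    have hlog : Real.log 2 ≤ 1 := by
      have := Real.log_le_sub_one_of_pos (by norm_num : (0:ℝ) < 2)
      linarith
    have hmono : Real.exp (-2:ℝ) < Real.exp (-(Real.log 2)) :=
      Real.exp_lt_exp.mpr (by linarith)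
    rw [show Real.exp (-(Real.log 2)) = (2:ℝ)⁻¹ by
      rw [Real.exp_neg, Real.exp_log (by norm_num : (0:ℝ) < 2)]] at hmono
    linarith [hmono]
  have hδ0 : (0:ℝ) < Real.exp (-(j:ℝ)^2) := Real.exp_pos _
  have hlhs : Real.exp (-(j:ℝ)^2) * X < X * |e m| := by
    calc Real.exp (-(j:ℝ)^2) * X = X * Real.exp (-(j:ℝ)^2) := by ring
    _ < X * |e m| := mul_lt_mul_of_pos_left hδ hXpos
  have hrhs : Real.exp (-(j:ℝ)^2) * Real.exp (-2) * X
      < Real.exp (-(j:ℝ)^2) * (1/2) * X := by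
    apply mul_lt_mul_of_pos_right (mul_lt_mul_of_pos_left h12 hδ0) hXpos
  have hgoal : cseq α m * Real.exp ((m:ℝ) * s) * |e m| / 2 = X * |e m| / 2 := by
    rw [hX_def]
  rw [hgoal]
  linarith only [hsum1, hsum2, hKB, hlhs, hrhs]

/-- With probability at least `1 - C exp(-c j²)`:
`inf_{s ≥ a_j} ((1/2) c_(m_j) e^(m_j s) |ε_(m_j)| - ∑_{i < m_j} |ε_i| c_i e^(i s)) > 0`. -/
theorem statement11 (α : ℝ) (hα : α ∈ Set.Ioo (0 : ℝ) 1)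
    {Ω : Type*} [MeasurableSpace Ω] (μ : Measure Ω) [IsProbabilityMeasure μ]
    (ε : ℕ → Ω → ℝ) (hmeas : ∀ k, Measurable (ε k))
    (hindep : iIndepFun ε μ)
    (hident : ∀ k, IdentDistrib (ε k) (ε 0) μ μ)
    (hint : ∀ k, Integrable (ε k) μ)
    (hmean : ∀ k, ∫ ω, |ε k ω| ∂μ ≤ 1)
    (C₀ : ℝ) (hC₀ : 0 < C₀)
    (hanti : ∀ k, ∀ t : ℝ, 0 ≤ t → (μ {ω | |ε k ω| ≤ t}).toReal ≤ C₀ * t) :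
    ∃ C > (0 : ℝ), ∃ c > (0 : ℝ), ∀ n j : ℕ, 1 ≤ j → mseq α j ≤ n →
      1 - C * Real.exp (-c * (j : ℝ) ^ 2) ≤
        (μ {ω | ∀ s : ℝ, aseq α j ≤ s →
          0 < cseq α (mseq α j) * Real.exp ((mseq α j : ℝ) * s) * |ε (mseq α j) ω| / 2 -
            ∑ i ∈ Finset.range (mseq α j),
              |ε i ω| * cseq α i * Real.exp ((i : ℝ) * s)}).toReal := by
  obtain ⟨J, hJ2, hkey⟩ := keylemma hα.1 hα.2
  refine ⟨(C₀ + 1) * Real.exp ((J:ℝ)^2/2), by positivity, 1/2, by norm_num, ?_⟩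
  intro n j hj1 hmn
  set A := {ω | ∀ s : ℝ, aseq α j ≤ s →
          0 < cseq α (mseq α j) * Real.exp ((mseq α j : ℝ) * s) * |ε (mseq α j) ω| / 2 -
            ∑ i ∈ Finset.range (mseq α j),
              |ε i ω| * cseq α i * Real.exp ((i : ℝ) * s)} with hA_def
  by_cases hjJ : j < J
  · -- small j : trivial bound
    have hjJ' : (j:ℝ) ≤ (J:ℝ) := by exact_mod_cast hjJ.le
    have hj0 : (0:ℝ) ≤ (j:ℝ) := Nat.cast_nonneg j
    have hsq : (j:ℝ)^2 ≤ (J:ℝ)^2 := by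
      apply pow_le_pow_left₀ hj0 hjJ' 2
    have hexp1 : (1:ℝ) ≤ Real.exp ((J:ℝ)^2/2) * Real.exp (-(1/2) * (j:ℝ)^2) := by
      rw [← Real.exp_add]
      apply Real.one_le_exp_iff.mpr
      linarith
    have hC1 : (1:ℝ) ≤ (C₀+1) := by linarith
    have h1 : (1:ℝ) ≤ (C₀ + 1) * Real.exp ((J:ℝ)^2/2) * Real.exp (-(1/2) * (j:ℝ)^2) := by
      rw [mul_assoc]
      calc (1:ℝ) = 1 * 1 := by norm_num
      _ ≤ (C₀+1) * (Real.exp ((J:ℝ)^2/2) * Real.exp (-(1/2) * (j:ℝ)^2)) :=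
        mul_le_mul hC1 hexp1 (by norm_num) (by linarith)
    have h0' : (0:ℝ) ≤ (μ A).toReal := ENNReal.toReal_nonneg
    linarith
  · push_neg at hjJ
    obtain ⟨ha0, hA2, hkeyB, hE6⟩ := hkey j hjJ
    set m := mseq α j with hm_def
    set δ : ℝ := Real.exp (-(j:ℝ)^2) with hδ_def
    set K : ℝ := Real.exp ((j:ℝ)^2) with hK_def
    have hδ0 : 0 < δ := Real.exp_pos _
    have hK0 : 0 < K := Real.exp_pos _
    set F : Ω → ℝ := fun ω => ∑ i ∈ Finset.range m, |ε i ω| with hF_def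
    set E1 : Set Ω := {ω | δ < |ε m ω|} with hE1_def
    set E2 : Set Ω := {ω | F ω ≤ K} with hE2_def
    have hmeasF : Measurable F := by
      apply Finset.measurable_sum
      intro i _
      exact (hmeas i).abs
    have hmeas1 : MeasurableSet E1 := measurableSet_lt measurable_const (hmeas m).abs
    have hmeas2 : MeasurableSet E2 := measurableSet_le hmeasF measurable_const
    -- inclusion
    have hsub : E1 ∩ E2 ⊆ A := by
      rintro ω ⟨h1, h2⟩
      intro s hs
      exact det_incl hα.1 hα.2 ha0 hA2 hkeyB (fun i => ε i ω) h1 h2 s hs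
    -- bound on E1ᶜ
    have hb1 : (μ E1ᶜ).toReal ≤ C₀ * δ := by
      have hset : E1ᶜ = {ω | |ε m ω| ≤ δ} := by
        ext ω; simp [hE1_def, not_lt]
      rw [hset]
      exact hanti m δ hδ0.le
    -- bound on E2ᶜ (Markov)
    have hb2 : (μ E2ᶜ).toReal ≤ (m:ℝ) * δ := by
      have hF_int : Integrable F μ := integrable_finset_sum _ (fun i _ => (hint i).abs)
      have hF_nonneg : 0 ≤ᵐ[μ] F :=
        ae_of_all _ (fun ω => Finset.sum_nonneg fun i _ => abs_nonneg _)
      have hIF : ∫ ω, F ω ∂μ ≤ (m:ℝ) := by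
        rw [hF_def]
        rw [integral_finset_sum _ (fun i (_ : i ∈ Finset.range m) => (hint i).abs)]
        calc ∑ i ∈ Finset.range m, ∫ ω, |ε i ω| ∂μ
            ≤ ∑ _i ∈ Finset.range m, (1:ℝ) := Finset.sum_le_sum (fun i _ => hmean i)
        _ = (m:ℝ) := by simp
      have hmark := mul_meas_ge_le_integral_of_nonneg hF_nonneg hF_int K
      have hss : E2ᶜ ⊆ {ω | K ≤ F ω} := by
        intro ω hω
        have : ¬ (F ω ≤ K) := hω
        exact (not_le.mp this).le
      have hmono : (μ E2ᶜ).toReal ≤ (μ {ω | K ≤ F ω}).toReal :=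
        ENNReal.toReal_mono (measure_ne_top μ _) (measure_mono hss)
      have hT : (μ {ω | K ≤ F ω}).toReal ≤ (m:ℝ) / K := by
        rw [le_div_iff₀ hK0]
        calc (μ {ω | K ≤ F ω}).toReal * K = K * (μ {ω | K ≤ F ω}).toReal := by ring
        _ ≤ ∫ ω, F ω ∂μ := hmark
        _ ≤ (m:ℝ) := hIF
      have hdiv : (m:ℝ) / K = (m:ℝ) * δ := by
        rw [hδ_def, hK_def, Real.exp_neg, div_eq_mul_inv]
      linarith
    -- combine
    have h1R : (μ (E1 ∩ E2)).toReal + (μ (E1 ∩ E2)ᶜ).toReal = 1 := by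
      have hsum := measure_add_measure_compl (μ := μ) (hmeas1.inter hmeas2)
      have := congrArg ENNReal.toReal hsum
      rwa [ENNReal.toReal_add (measure_ne_top _ _) (measure_ne_top _ _), measure_univ,
        ENNReal.toReal_one] at this
    have hun : (μ (E1 ∩ E2)ᶜ).toReal ≤ (μ E1ᶜ).toReal + (μ E2ᶜ).toReal := by
      rw [Set.compl_inter]
      refine le_trans (ENNReal.toReal_mono ?_ (measure_union_le _ _)) ?_
      · exact ENNReal.add_ne_top.mpr ⟨measure_ne_top _ _, measure_ne_top _ _⟩
      · rw [ENNReal.toReal_add (measure_ne_top _ _) (measure_ne_top _ _)]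
    have hAm : (μ (E1 ∩ E2)).toReal ≤ (μ A).toReal :=
      ENNReal.toReal_mono (measure_ne_top μ _) (measure_mono hsub)
    -- final numeric chaining
    have hmδ : (m:ℝ) * δ ≤ Real.exp (-(j:ℝ)^2/2) := by
      rw [hδ_def, hm_def]
      exact hE6
    have hδhalf : C₀ * δ ≤ C₀ * Real.exp (-(j:ℝ)^2/2) := by
      apply mul_le_mul_of_nonneg_left _ hC₀.le
      rw [hδ_def]
      apply Real.exp_le_exp.mpr
      nlinarith [sq_nonneg (j:ℝ)]
    have hCexp : (C₀ + 1) * Real.exp (-(j:ℝ)^2/2) ≤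
        (C₀ + 1) * Real.exp ((J:ℝ)^2/2) * Real.exp (-(1/2) * (j:ℝ)^2) := by
      have he1 : (1:ℝ) ≤ Real.exp ((J:ℝ)^2/2) := Real.one_le_exp_iff.mpr (by positivity)
      have heq : Real.exp (-(j:ℝ)^2/2) = Real.exp (-(1/2) * (j:ℝ)^2) := by
        congr 1; ring
      rw [heq]
      have := mul_le_mul_of_nonneg_right he1
        (le_of_lt (Real.exp_pos (-(1/2) * (j:ℝ)^2)))
      calc (C₀+1) * Real.exp (-(1/2)*(j:ℝ)^2)
          = (C₀+1) * (1 * Real.exp (-(1/2)*(j:ℝ)^2)) := by ring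
      _ ≤ (C₀+1) * (Real.exp ((J:ℝ)^2/2) * Real.exp (-(1/2)*(j:ℝ)^2)) := by
          apply mul_le_mul_of_nonneg_left _ (by linarith)
          linarith [this]
      _ = (C₀ + 1) * Real.exp ((J:ℝ)^2/2) * Real.exp (-(1/2) * (j:ℝ)^2) := by ring
    linarith only [h1R, hun, hb1, hb2, hAm, hmδ, hδhalf, hCexp]
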